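/- arXiv:1311.5465 — 4 statements merged into one kernel-verified Lean document; each statement's English description precedes it below -/
import Mathlib

section
/- For every positive integer n, Σ_{d∣n} ((log d)² − (log d)(log(n/d))) = Σ_{d∣n} Λ(d)·log(d)·τ(n/d), where Λ is the von Mangoldt function and τ(m) is the number of divisors of m. -/
open Finset

/-- Swap a double divisor sum. -/
lemma swap_divisor_sum (n : ℕ) (f : ℕ → ℕ → ℝ) :
    ∑ d ∈ n.divisors, ∑ a ∈ d.divisors, f a d
      = ∑ a ∈ n.divisors, ∑ e ∈ (n / a).divisors, f a (a * e) := by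
  rw [Finset.sum_sigma', Finset.sum_sigma']
  refine Finset.sum_nbij' (fun p => ⟨p.2, p.1 / p.2⟩) (fun p => ⟨p.1 * p.2, p.1⟩) ?_ ?_ ?_ ?_ ?_
  · rintro ⟨d, a⟩ hp
    simp only [Finset.mem_sigma, Nat.mem_divisors] at hp ⊢
    obtain ⟨⟨hdn, hn0⟩, had, -⟩ := hp
    refine ⟨⟨had.trans hdn, hn0⟩, ?_, ?_⟩
    · rw [Nat.dvd_div_iff_mul_dvd (had.trans hdn), Nat.mul_div_cancel' had]
      exact hdn
    · exact (Nat.div_pos (Nat.le_of_dvd (Nat.pos_of_ne_zero hn0) (had.trans hdn))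
        (Nat.pos_of_dvd_of_pos had (Nat.pos_of_dvd_of_pos hdn (Nat.pos_of_ne_zero hn0)))).ne'
  · rintro ⟨a, e⟩ hp
    simp only [Finset.mem_sigma, Nat.mem_divisors] at hp ⊢
    obtain ⟨⟨han, hn0⟩, hea, hna0⟩ := hp
    have ha0 : a ≠ 0 := fun h => hn0 (by simpa [h] using han)
    have he0 : e ≠ 0 := fun h => hna0 (by simpa [h] using hea)
    rw [Nat.dvd_div_iff_mul_dvd han] at hea
    exact ⟨⟨hea, hn0⟩, Dvd.intro e rfl, Nat.mul_ne_zero ha0 he0⟩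
  · rintro ⟨d, a⟩ hp
    simp only [Finset.mem_sigma, Nat.mem_divisors] at hp
    obtain ⟨⟨hdn, hn0⟩, had, -⟩ := hp
    simp [Nat.mul_div_cancel' had]
  · rintro ⟨a, e⟩ hp
    simp only [Finset.mem_sigma, Nat.mem_divisors] at hp
    obtain ⟨⟨han, hn0⟩, hea, -⟩ := hp
    have ha0 : 0 < a := Nat.pos_of_ne_zero (fun h => hn0 (by simpa [h] using han))
    simp [Nat.mul_div_cancel_left _ ha0]
  · rintro ⟨d, a⟩ hp
    simp only [Finset.mem_sigma, Nat.mem_divisors] at hp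
    obtain ⟨⟨hdn, hn0⟩, had, -⟩ := hp
    simp [Nat.mul_div_cancel' had]

/-- For every positive integer `n`,
`Σ_{d∣n} ((log d)² − (log d)(log(n/d))) = Σ_{d∣n} Λ(d)·log(d)·τ(n/d)`. -/
theorem aCoeff_eq_vonMangoldt_tau (n : ℕ) (hn : 0 < n) :
    ∑ d ∈ n.divisors, ((Real.log d) ^ 2 - Real.log d * Real.log ((n / d : ℕ) : ℝ)) =
      ∑ d ∈ n.divisors,
        ArithmeticFunction.vonMangoldt d * Real.log d * ((n / d : ℕ).divisors.card : ℝ) := by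
  have step1 : ∀ d ∈ n.divisors,
      (Real.log d) ^ 2 - Real.log d * Real.log ((n / d : ℕ) : ℝ)
        = ∑ a ∈ d.divisors,
            ArithmeticFunction.vonMangoldt a * (Real.log d - Real.log ((n / d : ℕ) : ℝ)) := by
    intro d hd
    rw [← Finset.sum_mul, ArithmeticFunction.vonMangoldt_sum]
    ring
  rw [Finset.sum_congr rfl step1,
    swap_divisor_sum n (fun a d => ArithmeticFunction.vonMangoldt a *
      (Real.log d - Real.log ((n / d : ℕ) : ℝ)))]
  refine Finset.sum_congr rfl fun a ha => ?_
  rw [Nat.mem_divisors] at ha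
  have ha0 : 0 < a := Nat.pos_of_dvd_of_pos ha.1 hn
  have key : ∀ e ∈ (n / a).divisors,
      ArithmeticFunction.vonMangoldt a *
        (Real.log ((a * e : ℕ) : ℝ) - Real.log ((n / (a * e) : ℕ) : ℝ))
      = ArithmeticFunction.vonMangoldt a *
        (Real.log a + (Real.log e - Real.log ((n / a / e : ℕ) : ℝ))) := by
    intro e he
    rw [Nat.mem_divisors] at he
    have he0 : 0 < e := Nat.pos_of_dvd_of_pos he.1 (Nat.pos_of_ne_zero he.2)
    rw [← Nat.div_div_eq_div_mul]
    push_cast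
    rw [Real.log_mul (by positivity) (by positivity)]
    ring
  rw [Finset.sum_congr rfl key]
  have zero_sum : ∑ e ∈ (n / a).divisors,
      (Real.log e - Real.log ((n / a / e : ℕ) : ℝ)) = 0 := by
    rw [Finset.sum_sub_distrib]
    rw [Nat.sum_div_divisors (n / a) (fun e => Real.log e)]
    simp
  calc ∑ e ∈ (n / a).divisors, ArithmeticFunction.vonMangoldt a *
        (Real.log a + (Real.log e - Real.log ((n / a / e : ℕ) : ℝ)))
      = ∑ e ∈ (n / a).divisors, (ArithmeticFunction.vonMangoldt a * Real.log a
          + ArithmeticFunction.vonMangoldt a * (Real.log e - Real.log ((n / a / e : ℕ) : ℝ))) := by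
        refine Finset.sum_congr rfl fun e he => by ring
    _ = ((n / a).divisors.card : ℝ) * (ArithmeticFunction.vonMangoldt a * Real.log a)
          + ArithmeticFunction.vonMangoldt a * ∑ e ∈ (n / a).divisors,
            (Real.log e - Real.log ((n / a / e : ℕ) : ℝ)) := by
        rw [Finset.sum_add_distrib, Finset.sum_const, ← Finset.mul_sum, nsmul_eq_mul]
    _ = ArithmeticFunction.vonMangoldt a * Real.log a * ((n / a).divisors.card : ℝ) := by
        rw [zero_sum]; ring
end

section
/- For every complex number s that is not an integer, ν(s) = χ(s)²·( ν(1−s) + ( ψ'(1−s) − (π/2)²·csc(πs/2)² )·ζ(1−s)² ), where ψ' is the derivative of the digamma function ψ = Γ'/Γ. -/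
open Complex

/-- `ν(s) = ζ(s)·ζ''(s) − ζ'(s)²`. -/
noncomputable def nu (s : ℂ) : ℂ :=
  riemannZeta s * iteratedDeriv 2 riemannZeta s - (deriv riemannZeta s) ^ 2

/-- `χ(s) = 2·(2π)^{s−1}·sin(πs/2)·Γ(1−s)`, the factor from the functional equation. -/
noncomputable def chi (s : ℂ) : ℂ :=
  2 * (2 * (Real.pi : ℂ)) ^ (s - 1) * Complex.sin ((Real.pi : ℂ) * s / 2) * Complex.Gamma (1 - s)

/-- The digamma function `ψ = Γ'/Γ`. -/
noncomputable def digamma (s : ℂ) : ℂ :=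
  deriv Complex.Gamma s / Complex.Gamma s

namespace NuFE

def V : Set ℂ := {z : ℂ | ∀ n : ℤ, z ≠ (n : ℂ)}

lemma isOpen_V : IsOpen V := by
  have h1 : IsClosed (Set.range ((↑) : ℤ → ℂ)) := by
    have : ((↑) : ℤ → ℂ) = (fun x : ℝ => (x : ℂ)) ∘ ((↑) : ℤ → ℝ) := by ext n; simp
    rw [this, Set.range_comp]
    exact Complex.isometry_ofReal.isClosedEmbedding.isClosedMap _
      Int.isClosedEmbedding_coe_real.isClosed_range
  have : V = (Set.range ((↑) : ℤ → ℂ))ᶜ := by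
    ext z; simp [V, Set.range, eq_comm]
  rw [this]; exact h1.isOpen_compl

lemma mem_V {z : ℂ} (hz : ∀ n : ℤ, z ≠ (n : ℂ)) : z ∈ V := hz

lemma one_sub_mem {z : ℂ} (hz : z ∈ V) : (1 - z) ∈ V := by
  intro n h
  exact hz (1 - n) (by push_cast; linear_combination -h)

lemma natcast_cond {z : ℂ} (hz : z ∈ V) : ∀ m : ℕ, z ≠ -(m : ℂ) := by
  intro m h; exact hz (-m) (by push_cast at h ⊢; exact h)

lemma ne_one {z : ℂ} (hz : z ∈ V) : z ≠ 1 := by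
  intro h; exact hz 1 (by push_cast; exact h)

lemma analytic_Gamma : AnalyticOnNhd ℂ Complex.Gamma V :=
  DifferentiableOn.analyticOnNhd
    (fun z hz => (Complex.differentiableAt_Gamma z (natcast_cond hz)).differentiableWithinAt)
    isOpen_V

lemma analytic_zeta : AnalyticOnNhd ℂ riemannZeta V :=
  DifferentiableOn.analyticOnNhd
    (fun z hz => (differentiableAt_riemannZeta (ne_one hz)).differentiableWithinAt)
    isOpen_V

end NuFE

namespace NuFE

noncomputable def F (z : ℂ) : ℂ :=
  2 * (2 * (Real.pi : ℂ)) ^ (z - 1) * Complex.sin ((Real.pi : ℂ) * z / 2) *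
    Complex.Gamma (1 - z) * riemannZeta (1 - z)

noncomputable def F1 (z : ℂ) : ℂ :=
  2 * (2 * (Real.pi : ℂ)) ^ (z - 1) *
    (Complex.log (2 * (Real.pi : ℂ)) * Complex.sin ((Real.pi : ℂ) * z / 2) *
        Complex.Gamma (1 - z) * riemannZeta (1 - z)
      + ((Real.pi : ℂ) / 2) * Complex.cos ((Real.pi : ℂ) * z / 2) *
        Complex.Gamma (1 - z) * riemannZeta (1 - z)
      - Complex.sin ((Real.pi : ℂ) * z / 2) * deriv Complex.Gamma (1 - z) * riemannZeta (1 - z)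
      - Complex.sin ((Real.pi : ℂ) * z / 2) * Complex.Gamma (1 - z) * deriv riemannZeta (1 - z))

noncomputable def F2 (z : ℂ) : ℂ :=
  2 * (2 * (Real.pi : ℂ)) ^ (z - 1) *
    (Complex.log (2 * (Real.pi : ℂ)) ^ 2 * Complex.sin ((Real.pi : ℂ) * z / 2) *
        Complex.Gamma (1 - z) * riemannZeta (1 - z)
      + 2 * Complex.log (2 * (Real.pi : ℂ)) * ((Real.pi : ℂ) / 2) *
        Complex.cos ((Real.pi : ℂ) * z / 2) * Complex.Gamma (1 - z) * riemannZeta (1 - z)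
      - 2 * Complex.log (2 * (Real.pi : ℂ)) * Complex.sin ((Real.pi : ℂ) * z / 2) *
        deriv Complex.Gamma (1 - z) * riemannZeta (1 - z)
      - 2 * Complex.log (2 * (Real.pi : ℂ)) * Complex.sin ((Real.pi : ℂ) * z / 2) *
        Complex.Gamma (1 - z) * deriv riemannZeta (1 - z)
      - ((Real.pi : ℂ) / 2) ^ 2 * Complex.sin ((Real.pi : ℂ) * z / 2) *
        Complex.Gamma (1 - z) * riemannZeta (1 - z)
      - 2 * ((Real.pi : ℂ) / 2) * Complex.cos ((Real.pi : ℂ) * z / 2) *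
        deriv Complex.Gamma (1 - z) * riemannZeta (1 - z)
      - 2 * ((Real.pi : ℂ) / 2) * Complex.cos ((Real.pi : ℂ) * z / 2) *
        Complex.Gamma (1 - z) * deriv riemannZeta (1 - z)
      + Complex.sin ((Real.pi : ℂ) * z / 2) * deriv (deriv Complex.Gamma) (1 - z) *
        riemannZeta (1 - z)
      + 2 * Complex.sin ((Real.pi : ℂ) * z / 2) * deriv Complex.Gamma (1 - z) *
        deriv riemannZeta (1 - z)
      + Complex.sin ((Real.pi : ℂ) * z / 2) * Complex.Gamma (1 - z) *
        deriv (deriv riemannZeta) (1 - z))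

lemma hasDerivAt_P (z : ℂ) :
    HasDerivAt (fun w : ℂ => (2 * (Real.pi : ℂ)) ^ (w - 1))
      ((2 * (Real.pi : ℂ)) ^ (z - 1) * Complex.log (2 * (Real.pi : ℂ))) z := by
  have h2 : (2 * (Real.pi : ℂ)) ≠ 0 := by
    simp [Real.pi_ne_zero, Complex.ofReal_ne_zero]
  have := ((hasDerivAt_id z).sub_const 1).const_cpow (c := 2 * (Real.pi : ℂ)) (Or.inl h2)
  simpa using this

lemma hasDerivAt_S (z : ℂ) :
    HasDerivAt (fun w : ℂ => Complex.sin ((Real.pi : ℂ) * w / 2))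
      (((Real.pi : ℂ) / 2) * Complex.cos ((Real.pi : ℂ) * z / 2)) z := by
  have hlin : HasDerivAt (fun w : ℂ => (Real.pi : ℂ) * w / 2) ((Real.pi : ℂ) / 2) z := by
    simpa using (((hasDerivAt_id z).const_mul (Real.pi : ℂ)).div_const 2)
  have := (Complex.hasDerivAt_sin ((Real.pi : ℂ) * z / 2)).comp z hlin
  simpa [mul_comm, Function.comp_def] using this

lemma hasDerivAt_C (z : ℂ) :
    HasDerivAt (fun w : ℂ => Complex.cos ((Real.pi : ℂ) * w / 2))
      (-(((Real.pi : ℂ) / 2) * Complex.sin ((Real.pi : ℂ) * z / 2))) z := by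
  have hlin : HasDerivAt (fun w : ℂ => (Real.pi : ℂ) * w / 2) ((Real.pi : ℂ) / 2) z := by
    simpa using (((hasDerivAt_id z).const_mul (Real.pi : ℂ)).div_const 2)
  have := (Complex.hasDerivAt_cos ((Real.pi : ℂ) * z / 2)).comp z hlin
  simpa [mul_comm, Function.comp_def] using this

lemma hasDerivAt_comp_one_sub (f : ℂ → ℂ) (z : ℂ) (hf : DifferentiableAt ℂ f (1 - z)) :
    HasDerivAt (fun w : ℂ => f (1 - w)) (-(deriv f (1 - z))) z := by
  have h1 : HasDerivAt (fun w : ℂ => 1 - w) (-1) z := by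
    simpa using (hasDerivAt_id z).const_sub 1
  have := (hf.hasDerivAt).comp z h1
  simpa [mul_comm, Function.comp_def] using this

lemma hasDerivAt_F {z : ℂ} (hz : z ∈ V) : HasDerivAt F (F1 z) z := by
  have h1z := one_sub_mem hz
  have hG : DifferentiableAt ℂ Complex.Gamma (1 - z) :=
    Complex.differentiableAt_Gamma _ (natcast_cond h1z)
  have hZ : DifferentiableAt ℂ riemannZeta (1 - z) :=
    differentiableAt_riemannZeta (ne_one h1z)
  have h := ((((hasDerivAt_P z).const_mul 2).mul (hasDerivAt_S z)).mul
      (hasDerivAt_comp_one_sub _ z hG)).mul (hasDerivAt_comp_one_sub _ z hZ)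
  refine h.congr_deriv ?_
  unfold F1; simp only [Pi.mul_apply, Pi.add_apply, Pi.sub_apply]; ring

lemma hasDerivAt_F1 {z : ℂ} (hz : z ∈ V) : HasDerivAt F1 (F2 z) z := by
  have h1z := one_sub_mem hz
  have hG : DifferentiableAt ℂ Complex.Gamma (1 - z) :=
    Complex.differentiableAt_Gamma _ (natcast_cond h1z)
  have hZ : DifferentiableAt ℂ riemannZeta (1 - z) :=
    differentiableAt_riemannZeta (ne_one h1z)
  have hG1 : DifferentiableAt ℂ (deriv Complex.Gamma) (1 - z) :=
    ((analytic_Gamma.deriv) _ h1z).differentiableAt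
  have hZ1 : DifferentiableAt ℂ (deriv riemannZeta) (1 - z) :=
    ((analytic_zeta.deriv) _ h1z).differentiableAt
  have hGc := hasDerivAt_comp_one_sub _ z hG
  have hZc := hasDerivAt_comp_one_sub _ z hZ
  have hG1c := hasDerivAt_comp_one_sub _ z hG1
  have hZ1c := hasDerivAt_comp_one_sub _ z hZ1
  have hS := hasDerivAt_S z
  have hC := hasDerivAt_C z
  have hP := hasDerivAt_P z
  have hinner := (((((hS.const_mul (Complex.log (2 * (Real.pi : ℂ)))).mul hGc).mul hZc).add
      (((hC.const_mul ((Real.pi : ℂ) / 2)).mul hGc).mul hZc)).sub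
      ((hS.mul hG1c).mul hZc)).sub ((hS.mul hGc).mul hZ1c)
  have h := (hP.const_mul 2).mul hinner
  have hfun : F1 = (fun w : ℂ => 2 * (2 * (Real.pi : ℂ)) ^ (w - 1) *
      (Complex.log (2 * (Real.pi : ℂ)) * Complex.sin ((Real.pi : ℂ) * w / 2) *
          Complex.Gamma (1 - w) * riemannZeta (1 - w)
        + ((Real.pi : ℂ) / 2) * Complex.cos ((Real.pi : ℂ) * w / 2) *
          Complex.Gamma (1 - w) * riemannZeta (1 - w)
        - Complex.sin ((Real.pi : ℂ) * w / 2) * deriv Complex.Gamma (1 - w) * riemannZeta (1 - w)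
        - Complex.sin ((Real.pi : ℂ) * w / 2) * Complex.Gamma (1 - w) *
          deriv riemannZeta (1 - w))) := rfl
  rw [hfun]
  refine h.congr_deriv ?_
  unfold F2; simp only [Pi.mul_apply, Pi.add_apply, Pi.sub_apply]; ring
end NuFE

namespace NuFE

lemma zeta_eq {z : ℂ} (hz : z ∈ V) : riemannZeta z = F z := by
  have h1 : ∀ n : ℕ, (1 - z) ≠ -(n : ℂ) := natcast_cond (one_sub_mem hz)
  have h2 : (1 - z) ≠ 1 := ne_one (one_sub_mem hz)
  have := riemannZeta_one_sub h1 h2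
  rw [show (1 : ℂ) - (1 - z) = z by ring] at this
  rw [this]
  unfold F
  rw [show -(1 - z) = z - 1 by ring,
    show (Real.pi : ℂ) * (1 - z) / 2 = (Real.pi : ℂ) / 2 - (Real.pi : ℂ) * z / 2 by ring,
    Complex.cos_pi_div_two_sub]
  ring

lemma eventually_eq {z : ℂ} (hz : z ∈ V) : riemannZeta =ᶠ[nhds z] F := by
  filter_upwards [isOpen_V.mem_nhds hz] with w hw
  exact zeta_eq hw

lemma deriv_zeta_eq {z : ℂ} (hz : z ∈ V) : deriv riemannZeta z = F1 z := by
  rw [(eventually_eq hz).deriv_eq]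
  exact (hasDerivAt_F hz).deriv

lemma deriv2_zeta_eq {z : ℂ} (hz : z ∈ V) : deriv (deriv riemannZeta) z = F2 z := by
  have h : deriv riemannZeta =ᶠ[nhds z] F1 := by
    filter_upwards [isOpen_V.mem_nhds hz] with w hw
    exact deriv_zeta_eq hw
  rw [h.deriv_eq]
  exact (hasDerivAt_F1 hz).deriv

lemma S_ne_zero {z : ℂ} (hz : z ∈ V) : Complex.sin ((Real.pi : ℂ) * z / 2) ≠ 0 := by
  rw [Ne, Complex.sin_eq_zero_iff]
  rintro ⟨k, hk⟩
  have hpi : (Real.pi : ℂ) ≠ 0 := Complex.ofReal_ne_zero.mpr Real.pi_ne_zero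
  apply hz (2 * k)
  push_cast
  field_simp at hk
  -- hk : π * z = k * π * 2
  have : (Real.pi : ℂ) * z = (Real.pi : ℂ) * (2 * k) := by rw [hk]
  exact mul_left_cancel₀ hpi this

lemma G_ne_zero {z : ℂ} (hz : z ∈ V) : Complex.Gamma (1 - z) ≠ 0 :=
  Complex.Gamma_ne_zero (natcast_cond (one_sub_mem hz))

end NuFE


/-- Functional equation:
`ν(s) = χ(s)²·(ν(1−s) + (ψ'(1−s) − (π/2)²·csc(πs/2)²)·ζ(1−s)²)` for non-integer `s`. -/
theorem nu_functional_equation (s : ℂ) (hs : ∀ n : ℤ, s ≠ (n : ℂ)) :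
    nu s = chi s ^ 2 *
      (nu (1 - s) +
        (deriv _root_.digamma (1 - s)
            - ((Real.pi : ℂ) / 2) ^ 2 * (Complex.sin ((Real.pi : ℂ) * s / 2))⁻¹ ^ 2)
          * riemannZeta (1 - s) ^ 2) := by
  have hsV : s ∈ NuFE.V := hs
  have h1sV := NuFE.one_sub_mem hsV
  have hit : iteratedDeriv 2 riemannZeta = deriv (deriv riemannZeta) := by
    rw [iteratedDeriv_succ, iteratedDeriv_one]
  have hGd : DifferentiableAt ℂ Complex.Gamma (1 - s) :=
    Complex.differentiableAt_Gamma _ (NuFE.natcast_cond h1sV)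
  have hG1d : DifferentiableAt ℂ (deriv Complex.Gamma) (1 - s) :=
    ((NuFE.analytic_Gamma.deriv) _ h1sV).differentiableAt
  have hGne : Complex.Gamma (1 - s) ≠ 0 := NuFE.G_ne_zero hsV
  have hSne : Complex.sin ((Real.pi : ℂ) * s / 2) ≠ 0 := NuFE.S_ne_zero hsV
  have hdig : deriv _root_.digamma (1 - s) =
      (deriv (deriv Complex.Gamma) (1 - s) * Complex.Gamma (1 - s)
        - deriv Complex.Gamma (1 - s) * deriv Complex.Gamma (1 - s))
        / Complex.Gamma (1 - s) ^ 2 := by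
    have h := hG1d.hasDerivAt.div hGd.hasDerivAt hGne
    exact h.deriv
  unfold nu chi
  rw [hit, NuFE.deriv2_zeta_eq hsV, NuFE.deriv_zeta_eq hsV, NuFE.zeta_eq hsV, hdig]
  unfold NuFE.F NuFE.F1 NuFE.F2
  set I := (Complex.sin ((Real.pi : ℂ) * s / 2))⁻¹ with hI'
  set D := (deriv (deriv Complex.Gamma) (1 - s) * Complex.Gamma (1 - s)
        - deriv Complex.Gamma (1 - s) * deriv Complex.Gamma (1 - s))
        / Complex.Gamma (1 - s) ^ 2 with hD'
  have hI : I * Complex.sin ((Real.pi : ℂ) * s / 2) = 1 := inv_mul_cancel₀ hSne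
  have hD : D * Complex.Gamma (1 - s) ^ 2 =
      deriv (deriv Complex.Gamma) (1 - s) * Complex.Gamma (1 - s)
        - deriv Complex.Gamma (1 - s) * deriv Complex.Gamma (1 - s) :=
    div_mul_cancel₀ _ (pow_ne_zero 2 hGne)
  have hSC : Complex.sin ((Real.pi : ℂ) * s / 2) ^ 2
      + Complex.cos ((Real.pi : ℂ) * s / 2) ^ 2 = 1 := Complex.sin_sq_add_cos_sq _
  linear_combination
    (-4 * ((2 * (Real.pi : ℂ)) ^ (s - 1)) ^ 2 * Complex.sin ((Real.pi : ℂ) * s / 2) ^ 2 *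
      riemannZeta (1 - s) ^ 2) * hD
    + (4 * ((2 * (Real.pi : ℂ)) ^ (s - 1)) ^ 2 * Complex.Gamma (1 - s) ^ 2 *
        ((Real.pi : ℂ) / 2) ^ 2 * riemannZeta (1 - s) ^ 2 *
        (Complex.sin ((Real.pi : ℂ) * s / 2) * I + 1)) * hI
    + (-4 * ((2 * (Real.pi : ℂ)) ^ (s - 1)) ^ 2 * ((Real.pi : ℂ) / 2) ^ 2 *
        Complex.Gamma (1 - s) ^ 2 * riemannZeta (1 - s) ^ 2) * hSC
end

section
/- For every complex number s with Re(s) ≥ 4.25, ν(s) = ζ(s)·ζ''(s) − ζ'(s)² ≠ 0. -/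
open Complex

section Auxiliary

open LSeries ArithmeticFunction
open scoped LSeries.notation

private lemma rpow_425_le {x c : ℝ} (hx : 0 < x) (hc : 0 < c) (h : x ^ (17:ℕ) ≤ c ^ (4:ℕ)) :
    x ^ (4.25:ℝ) ≤ c := by
  have h1 : (x ^ (4.25:ℝ)) ^ (4:ℕ) = x ^ (17:ℕ) := by
    rw [← Real.rpow_natCast (x ^ (4.25:ℝ)) 4, ← Real.rpow_mul hx.le, ← Real.rpow_natCast x 17]
    norm_num
  exact le_of_pow_le_pow_left₀ (n := 4) (by norm_num) hc.le (by rw [h1]; exact h)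

private lemma log_le_aux {p m k : ℕ} (hp : 0 < p) (h : p ^ m ≤ 2 ^ k) :
    (m:ℝ) * Real.log p ≤ (k:ℝ) * Real.log 2 := by
  have h1 : Real.log ((p:ℝ) ^ m) ≤ Real.log ((2:ℝ) ^ k) := by
    apply Real.log_le_log (by positivity)
    exact_mod_cast h
  rwa [Real.log_pow, Real.log_pow] at h1

private lemma log_sq_le {x : ℝ} (hx : 1 ≤ x) : Real.log x ^ 2 ≤ 4 * x := by
  have h0 : (0:ℝ) < x := by linarith
  have hs : Real.log x ≤ 2 * Real.sqrt x := by
    have h1 : Real.log x = 2 * Real.log (Real.sqrt x) := by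
      conv_lhs => rw [← Real.sq_sqrt h0.le]
      rw [Real.log_pow]
      norm_num
    have h2 : Real.log (Real.sqrt x) ≤ Real.sqrt x - 1 :=
      Real.log_le_sub_one_of_pos (Real.sqrt_pos.mpr h0)
    nlinarith [Real.sqrt_nonneg x]
  have hl : 0 ≤ Real.log x := Real.log_nonneg hx
  nlinarith [Real.sq_sqrt h0.le, Real.sqrt_nonneg x]

private lemma term_norm_eq (s : ℂ) {n : ℕ} (hn : n ≠ 0) :
    ‖term (logMul ↗Λ) s n‖ = Real.log n * Λ n / (n:ℝ) ^ s.re := by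
  rw [LSeries.norm_term_eq, if_neg hn]
  congr 1
  rw [logMul, ← Complex.natCast_log, norm_mul, Complex.norm_real, Complex.norm_real,
    Real.norm_eq_abs, Real.norm_eq_abs,
    _root_.abs_of_nonneg (Real.log_natCast_nonneg n),
    _root_.abs_of_nonneg (vonMangoldt_nonneg (n := n))]

private lemma term_le {s : ℂ} (hσ : (4.25:ℝ) ≤ s.re) {n : ℕ} (hn : 2 ≤ n) {q : ℝ}
    (h : Real.log n * Λ n * ((2:ℝ)/n) ^ (4.25:ℝ) ≤ q) :
    ‖term (logMul ↗Λ) s n‖ ≤ q * (2:ℝ) ^ (-s.re) := by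
  rw [term_norm_eq s (by omega)]
  have hn0 : (0:ℝ) < n := by exact_mod_cast Nat.lt_of_lt_of_le Nat.zero_lt_two hn
  have ha : 0 ≤ Real.log n * Λ n :=
    mul_nonneg (Real.log_natCast_nonneg n) vonMangoldt_nonneg
  have hx0 : (0:ℝ) < 2 / n := by positivity
  have hx1 : (2:ℝ) / n ≤ 1 := by
    rw [div_le_one hn0]; exact_mod_cast hn
  have hmono : ((2:ℝ)/n) ^ s.re ≤ ((2:ℝ)/n) ^ (4.25:ℝ) :=
    Real.rpow_le_rpow_of_exponent_ge hx0 hx1 hσ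
  have hrw : Real.log n * Λ n / (n:ℝ) ^ s.re
      = (Real.log n * Λ n * ((2:ℝ)/n) ^ s.re) * (2:ℝ) ^ (-s.re) := by
    rw [Real.div_rpow (by norm_num) hn0.le, Real.rpow_neg (by norm_num)]
    have h2 : (0:ℝ) < (2:ℝ) ^ s.re := Real.rpow_pos_of_pos (by norm_num) _
    have hn2 : (0:ℝ) < (n:ℝ) ^ s.re := Real.rpow_pos_of_pos hn0 _
    field_simp
  rw [hrw]
  have h2 : (0:ℝ) ≤ (2:ℝ) ^ (-s.re) := (Real.rpow_pos_of_pos (by norm_num) _).le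
  apply mul_le_mul_of_nonneg_right _ h2
  calc Real.log n * Λ n * ((2:ℝ)/n) ^ s.re
      ≤ Real.log n * Λ n * ((2:ℝ)/n) ^ (4.25:ℝ) := mul_le_mul_of_nonneg_left hmono ha
    _ ≤ q := h

private lemma tail_rpow_le {M : ℝ} (hM16 : 16 ≤ M) :
    ((2:ℝ)/M) ^ (4.25:ℝ) ≤ 9.515/((M-2)*(M-1)*(M*M)) := by
  have hM0 : (0:ℝ) < M := by linarith
  have hD0 : (0:ℝ) < (M-2)*(M-1)*(M*M) := by
    have h1 : (0:ℝ) < M - 2 := by linarith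
    have h2 : (0:ℝ) < M - 1 := by linarith
    positivity
  apply rpow_425_le (by positivity) (by positivity)
  rw [div_pow, div_pow, div_le_div_iff₀ (by positivity) (by positivity)]
  have hD4 : (M-2)*(M-1)*(M*M) ≤ M^4 := by nlinarith
  have h1 : ((M-2)*(M-1)*(M*M))^4 ≤ (M^4)^4 := pow_le_pow_left₀ hD0.le hD4 4
  have h1' : ((M-2)*(M-1)*(M*M))^4 ≤ M^16 := by nlinarith [h1]
  have hp : (0:ℝ) ≤ M^16 := by positivity
  have h4 : M^16 * 16 ≤ M^16 * M := mul_le_mul_of_nonneg_left hM16 hp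
  have h5 : M^17 = M^16 * M := by ring
  rw [h5]
  linarith [mul_nonneg hp hM0.le]

private lemma tail_term_bound (n : ℕ) :
    Real.log ((n+16:ℕ)) * Λ (n+16) * ((2:ℝ)/((n+16:ℕ))) ^ (4.25:ℝ)
      ≤ 38.06 * (1/(((n:ℝ)+14)*((n:ℝ)+15)*((n:ℝ)+16))) := by
  obtain ⟨M, hMdef⟩ : ∃ M : ℝ, M = ((n:ℝ)+16) := ⟨_, rfl⟩
  have hcast : ((n+16:ℕ):ℝ) = M := by rw [hMdef]; push_cast; ring
  rw [hcast]
  have hM16 : (16:ℝ) ≤ M := by rw [hMdef]; linarith [Nat.cast_nonneg (α:=ℝ) n]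
  have hM0 : (0:ℝ) < M := by linarith
  have hD0 : (0:ℝ) < (M-2)*(M-1)*(M*M) := by
    have h1 : (0:ℝ) < M - 2 := by linarith
    have h2 : (0:ℝ) < M - 1 := by linarith
    positivity
  have hx : ((2:ℝ)/M) ^ (4.25:ℝ) ≤ 9.515/((M-2)*(M-1)*(M*M)) := tail_rpow_le hM16
  have hΛle : Λ (n+16) ≤ Real.log M := by
    have := vonMangoldt_le_log (n := n+16)
    rwa [hcast] at this
  have hΛ0 : 0 ≤ Λ (n+16) := vonMangoldt_nonneg
  have hlog0 : 0 ≤ Real.log M := Real.log_nonneg (by linarith)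
  have hx0 : (0:ℝ) ≤ ((2:ℝ)/M) ^ (4.25:ℝ) := by positivity
  have hlsq : Real.log M ^ 2 ≤ 4 * M := log_sq_le (by linarith)
  have hfin : Real.log M * Λ (n+16) * (((2:ℝ)/M) ^ (4.25:ℝ))
      ≤ (4*M) * (9.515/((M-2)*(M-1)*(M*M))) := by
    calc Real.log M * Λ (n+16) * (((2:ℝ)/M) ^ (4.25:ℝ))
        ≤ Real.log M * Real.log M * (((2:ℝ)/M) ^ (4.25:ℝ)) := by gcongr
      _ ≤ Real.log M * Real.log M * (9.515/((M-2)*(M-1)*(M*M))) := by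
          apply mul_le_mul_of_nonneg_left hx (mul_nonneg hlog0 hlog0)
      _ ≤ (4*M) * (9.515/((M-2)*(M-1)*(M*M))) := by
          apply mul_le_mul_of_nonneg_right _ (div_nonneg (by norm_num) hD0.le)
          nlinarith [hlsq]
  refine hfin.trans (le_of_eq ?_)
  have e1 : M - 2 = (n:ℝ) + 14 := by rw [hMdef]; ring
  have e2 : M - 1 = (n:ℝ) + 15 := by rw [hMdef]; ring
  rw [e1, e2, hMdef]
  have p1 : (0:ℝ) < (n:ℝ) + 14 := by have := Nat.cast_nonneg (α:=ℝ) n; linarith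
  have p2 : (0:ℝ) < (n:ℝ) + 15 := by have := Nat.cast_nonneg (α:=ℝ) n; linarith
  have p3 : (0:ℝ) < (n:ℝ) + 16 := by have := Nat.cast_nonneg (α:=ℝ) n; linarith
  field_simp
  ring

private lemma LSeries_logMul_vonMangoldt_ne_zero {s : ℂ} (hσ : (4.25:ℝ) ≤ s.re) :
    LSeries (logMul ↗Λ) s ≠ 0 := by
  have hs1 : 1 < s.re := by norm_num at hσ ⊢; linarith
  have habs : abscissaOfAbsConv ↗Λ < s.re := by
    refine lt_of_le_of_lt (abscissaOfAbsConv_le_of_forall_lt_LSeriesSummable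
      fun y hy => LSeriesSummable_vonMangoldt (by simpa using hy)) ?_
    exact_mod_cast hs1
  have hsum : LSeriesSummable (logMul ↗Λ) s := LSeriesSummable_logMul_of_lt_re habs
  intro h0
  obtain ⟨y, hydef⟩ : ∃ y : ℝ, y = (2:ℝ) ^ (-s.re) := ⟨_, rfl⟩
  have hy0 : 0 < y := hydef ▸ Real.rpow_pos_of_pos (by norm_num) _
  obtain ⟨g, hgdef⟩ : ∃ g : ℕ → ℂ, g = fun n => if n = 2 then 0 else term (logMul ↗Λ) s n :=
    ⟨_, rfl⟩
  have hgn : ∀ n, n ≠ 2 → g n = term (logMul ↗Λ) s n := by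
    intro n h
    rw [hgdef]
    exact if_neg h
  have hnorm : Summable (fun n => ‖term (logMul ↗Λ) s n‖) := summable_norm_iff.mpr hsum
  have hgle : ∀ n, ‖g n‖ ≤ ‖term (logMul ↗Λ) s n‖ := by
    intro n
    by_cases h : n = 2
    · have h2 : g n = 0 := by simp only [hgdef]; rw [if_pos h]
      rw [h2, norm_zero]
      exact norm_nonneg _
    · rw [hgn n h]
  have hgnorm : Summable (fun n => ‖g n‖) :=
    Summable.of_nonneg_of_le (fun n => norm_nonneg _) hgle hnorm
  have hgsum : Summable g := hgnorm.of_norm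
  have heq : LSeries (logMul ↗Λ) s = term (logMul ↗Λ) s 2 + ∑' n, g n := by
    simpa [hgdef, LSeries] using (Summable.tsum_eq_add_tsum_ite hsum 2)
  have ht2 : term (logMul ↗Λ) s 2 = - ∑' n, g n := by
    rw [h0] at heq
    exact eq_neg_of_add_eq_zero_left heq.symm
  -- norm of the main term
  have hmain : ‖term (logMul ↗Λ) s 2‖ = Real.log 2 * Real.log 2 * y := by
    rw [term_norm_eq s two_ne_zero, vonMangoldt_apply_prime Nat.prime_two, hydef,
      Real.rpow_neg (by norm_num), div_eq_mul_inv]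
    push_cast
    ring
  -- individual bounds on small terms
  have hb0 : ‖g 0‖ = 0 := by rw [hgn 0 (by norm_num), LSeries.term_zero, norm_zero]
  have hb1 : ‖g 1‖ = 0 := by
    rw [hgn 1 (by norm_num), term_norm_eq s one_ne_zero]
    simp
  have hb2 : ‖g 2‖ = 0 := by rw [hgdef]; simp
  have hzb : ∀ n : ℕ, n ≠ 0 → n ≠ 2 → Λ n = 0 → ‖g n‖ = 0 := by
    intro n hn h2 hΛ
    rw [hgn n h2, term_norm_eq s hn, hΛ]
    simp
  have hb6 : ‖g 6‖ = 0 := hzb 6 (by norm_num) (by norm_num) (vonMangoldt_eq_zero_iff.mpr (by decide))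
  have hb10 : ‖g 10‖ = 0 := hzb 10 (by norm_num) (by norm_num) (vonMangoldt_eq_zero_iff.mpr (by decide))
  have hb12 : ‖g 12‖ = 0 := hzb 12 (by norm_num) (by norm_num) (vonMangoldt_eq_zero_iff.mpr (by decide))
  have hb14 : ‖g 14‖ = 0 := hzb 14 (by norm_num) (by norm_num) (vonMangoldt_eq_zero_iff.mpr (by decide))
  have hb15 : ‖g 15‖ = 0 := hzb 15 (by norm_num) (by norm_num) (vonMangoldt_eq_zero_iff.mpr (by decide +kernel))
  have hl2u := Real.log_two_lt_d9
  have hl20 : (0:ℝ) ≤ Real.log 2 := Real.log_nonneg one_le_two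
  -- log upper bounds
  have hL3 : Real.log ((3:ℕ):ℝ) ≤ 1.1090355 := by
    have h5 := log_le_aux (p := 3) (m := 5) (k := 8) (by norm_num) (by norm_num)
    push_cast at h5 ⊢
    linarith
  have hL5 : Real.log ((5:ℕ):ℝ) ≤ 1.6173435 := by
    have h5 := log_le_aux (p := 5) (m := 3) (k := 7) (by norm_num) (by norm_num)
    push_cast at h5 ⊢
    linarith
  have hL7 : Real.log ((7:ℕ):ℝ) ≤ 1.9534148 := by
    have h5 := log_le_aux (p := 7) (m := 11) (k := 31) (by norm_num) (by norm_num)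
    push_cast at h5 ⊢
    linarith
  have hL11 : Real.log ((11:ℕ):ℝ) ≤ 2.4260152 := by
    have h5 := log_le_aux (p := 11) (m := 2) (k := 7) (by norm_num) (by norm_num)
    push_cast at h5 ⊢
    linarith
  have hL13 : Real.log ((13:ℕ):ℝ) ≤ 2.6339593 := by
    have h5 := log_le_aux (p := 13) (m := 5) (k := 19) (by norm_num) (by norm_num)
    push_cast at h5 ⊢
    linarith
  have hb3 : ‖g 3‖ ≤ 0.2197 * y := by
    rw [hgn 3 (by norm_num), hydef]
    apply term_le hσ (by norm_num)
    rw [vonMangoldt_apply_prime (by norm_num)]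
    have hc : ((2:ℝ)/((3:ℕ):ℝ)) ^ (4.25:ℝ) ≤ 0.1786 :=
      rpow_425_le (by norm_num) (by norm_num) (by norm_num)
    have hl0 : 0 ≤ Real.log ((3:ℕ):ℝ) := Real.log_natCast_nonneg 3
    refine le_trans (mul_le_mul (mul_le_mul hL3 hL3 hl0 (by norm_num)) hc (by positivity)
      (by norm_num)) (by norm_num)
  have hb4 : ‖g 4‖ ≤ 0.05051 * y := by
    rw [hgn 4 (by norm_num), hydef]
    apply term_le hσ (by norm_num)
    have hΛ4 : Λ (4:ℕ) = Real.log 2 := by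
      rw [show (4:ℕ) = 2^2 by norm_num, vonMangoldt_apply_pow two_ne_zero,
        vonMangoldt_apply_prime Nat.prime_two]
      norm_num
    have hlog4 : Real.log ((4:ℕ):ℝ) = 2 * Real.log 2 := by
      rw [show ((4:ℕ):ℝ) = 2^2 by norm_num, Real.log_pow]
      norm_num
    rw [hΛ4, hlog4]
    have hc : ((2:ℝ)/((4:ℕ):ℝ)) ^ (4.25:ℝ) ≤ 0.05256 :=
      rpow_425_le (by norm_num) (by norm_num) (by norm_num)
    refine le_trans (mul_le_mul (mul_le_mul (by linarith : 2*Real.log 2 ≤ 1.3862944)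
      (le_of_lt hl2u) hl20 (by norm_num)) hc (by positivity) (by norm_num)) (by norm_num)
  have hb5 : ‖g 5‖ ≤ 0.05332 * y := by
    rw [hgn 5 (by norm_num), hydef]
    apply term_le hσ (by norm_num)
    rw [vonMangoldt_apply_prime (by norm_num)]
    have hc : ((2:ℝ)/((5:ℕ):ℝ)) ^ (4.25:ℝ) ≤ 0.02038 :=
      rpow_425_le (by norm_num) (by norm_num) (by norm_num)
    have hl0 : 0 ≤ Real.log ((5:ℕ):ℝ) := Real.log_natCast_nonneg 5
    refine le_trans (mul_le_mul (mul_le_mul hL5 hL5 hl0 (by norm_num)) hc (by positivity)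
      (by norm_num)) (by norm_num)
  have hb7 : ‖g 7‖ ≤ 0.018595 * y := by
    rw [hgn 7 (by norm_num), hydef]
    apply term_le hσ (by norm_num)
    rw [vonMangoldt_apply_prime (by norm_num)]
    have hc : ((2:ℝ)/((7:ℕ):ℝ)) ^ (4.25:ℝ) ≤ 0.004873 :=
      rpow_425_le (by norm_num) (by norm_num) (by norm_num)
    have hl0 : 0 ≤ Real.log ((7:ℕ):ℝ) := Real.log_natCast_nonneg 7
    refine le_trans (mul_le_mul (mul_le_mul hL7 hL7 hl0 (by norm_num)) hc (by positivity)
      (by norm_num)) (by norm_num)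
  have hb8 : ‖g 8‖ ≤ 0.0039814 * y := by
    rw [hgn 8 (by norm_num), hydef]
    apply term_le hσ (by norm_num)
    have hΛ8 : Λ (8:ℕ) = Real.log 2 := by
      rw [show (8:ℕ) = 2^3 by norm_num, vonMangoldt_apply_pow (by norm_num),
        vonMangoldt_apply_prime Nat.prime_two]
      norm_num
    have hlog8 : Real.log ((8:ℕ):ℝ) = 3 * Real.log 2 := by
      rw [show ((8:ℕ):ℝ) = 2^3 by norm_num, Real.log_pow]
      norm_num
    rw [hΛ8, hlog8]
    have hc : ((2:ℝ)/((8:ℕ):ℝ)) ^ (4.25:ℝ) ≤ 0.0027622 :=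
      rpow_425_le (by norm_num) (by norm_num) (by norm_num)
    refine le_trans (mul_le_mul (mul_le_mul (by linarith : 3*Real.log 2 ≤ 2.0794416)
      (le_of_lt hl2u) hl20 (by norm_num)) hc (by positivity) (by norm_num)) (by norm_num)
  have hb9 : ‖g 9‖ ≤ 0.0041205 * y := by
    rw [hgn 9 (by norm_num), hydef]
    apply term_le hσ (by norm_num)
    have hΛ9 : Λ (9:ℕ) = Real.log ((3:ℕ):ℝ) := by
      rw [show (9:ℕ) = 3^2 by norm_num, vonMangoldt_apply_pow (by norm_num),
        vonMangoldt_apply_prime (by norm_num)]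
    have hlog9 : Real.log ((9:ℕ):ℝ) = 2 * Real.log ((3:ℕ):ℝ) := by
      push_cast
      rw [show (9:ℝ) = 3^2 by norm_num, Real.log_pow]
      norm_num
    rw [hΛ9, hlog9]
    have hc : ((2:ℝ)/((9:ℕ):ℝ)) ^ (4.25:ℝ) ≤ 0.001675 :=
      rpow_425_le (by norm_num) (by norm_num) (by norm_num)
    have hl0 : 0 ≤ Real.log ((3:ℕ):ℝ) := Real.log_natCast_nonneg 3
    refine le_trans (mul_le_mul (mul_le_mul (by linarith : 2*Real.log ((3:ℕ):ℝ) ≤ 2.218071)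
      hL3 hl0 (by norm_num)) hc (by positivity) (by norm_num)) (by norm_num)
  have hb11 : ‖g 11‖ ≤ 0.0042008 * y := by
    rw [hgn 11 (by norm_num), hydef]
    apply term_le hσ (by norm_num)
    rw [vonMangoldt_apply_prime (by norm_num)]
    have hc : ((2:ℝ)/((11:ℕ):ℝ)) ^ (4.25:ℝ) ≤ 0.0007137 :=
      rpow_425_le (by norm_num) (by norm_num) (by norm_num)
    have hl0 : 0 ≤ Real.log ((11:ℕ):ℝ) := Real.log_natCast_nonneg 11
    refine le_trans (mul_le_mul (mul_le_mul hL11 hL11 hl0 (by norm_num)) hc (by positivity)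
      (by norm_num)) (by norm_num)
  have hb13 : ‖g 13‖ ≤ 0.0024345 * y := by
    rw [hgn 13 (by norm_num), hydef]
    apply term_le hσ (by norm_num)
    rw [vonMangoldt_apply_prime (by norm_num)]
    have hc : ((2:ℝ)/((13:ℕ):ℝ)) ^ (4.25:ℝ) ≤ 0.0003509 :=
      rpow_425_le (by norm_num) (by norm_num) (by norm_num)
    have hl0 : 0 ≤ Real.log ((13:ℕ):ℝ) := Real.log_natCast_nonneg 13
    refine le_trans (mul_le_mul (mul_le_mul hL13 hL13 hl0 (by norm_num)) hc (by positivity)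
      (by norm_num)) (by norm_num)
  -- finite part
  have hA : ∑ n ∈ Finset.range 16, ‖g n‖ ≤ 0.3569 * y := by
    simp only [Finset.sum_range_succ, Finset.sum_range_zero]
    linarith [hb0, hb1, hb2, hb3, hb4, hb5, hb6, hb7, hb8, hb9, hb10, hb11, hb12, hb13,
      hb14, hb15, hy0]
  -- tail part
  have hB : ∑' n : ℕ, ‖g (n + 16)‖ ≤ 0.0907 * y := by
    have htails : Summable (fun n : ℕ => ‖g (n + 16)‖) :=
      (summable_nat_add_iff (f := fun n => ‖g n‖) 16).mpr hgnorm
    apply Summable.tsum_le_of_sum_range_le htails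
    intro N
    obtain ⟨H, hHdef⟩ : ∃ H : ℕ → ℝ, H = fun i : ℕ => 1/(2*((i:ℝ)+14)*((i:ℝ)+15)) := ⟨_, rfl⟩
    have hterm : ∀ n : ℕ, ‖g (n + 16)‖ ≤ (38.06 * y) * (H n - H (n+1)) := by
      intro n
      have hHn : H n - H (n+1) = 1/(((n:ℝ)+14)*((n:ℝ)+15)*((n:ℝ)+16)) := by
        rw [hHdef]
        have p1 : (0:ℝ) < (n:ℝ) + 14 := by positivity
        have p2 : (0:ℝ) < (n:ℝ) + 15 := by positivity
        have p3 : (0:ℝ) < (n:ℝ) + 16 := by positivity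
        push_cast
        field_simp
        ring
      rw [hHn]
      have := term_le hσ (n := n + 16) (by omega) (tail_term_bound n)
      rw [hgn (n+16) (by omega), hydef]
      calc ‖term (logMul ↗Λ) s (n+16)‖
          ≤ 38.06 * (1/(((n:ℝ)+14)*((n:ℝ)+15)*((n:ℝ)+16))) * (2:ℝ) ^ (-s.re) := this
        _ = 38.06 * (2:ℝ) ^ (-s.re) * (1/(((n:ℝ)+14)*((n:ℝ)+15)*((n:ℝ)+16))) := by ring
    calc ∑ n ∈ Finset.range N, ‖g (n + 16)‖
        ≤ ∑ n ∈ Finset.range N, (38.06 * y) * (H n - H (n+1)) :=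
          Finset.sum_le_sum fun n _ => hterm n
      _ = (38.06 * y) * (H 0 - H N) := by
          rw [← Finset.mul_sum, Finset.sum_range_sub' H N]
      _ ≤ 0.0907 * y := by
          have hH0 : H 0 = 1/420 := by rw [hHdef]; norm_num
          have hHN : 0 ≤ H N := by
            rw [hHdef]
            positivity
          rw [hH0]
          nlinarith [hy0]
  -- put everything together
  have hle : ‖term (logMul ↗Λ) s 2‖ ≤ ∑' n, ‖g n‖ := by
    rw [ht2, norm_neg]
    exact norm_tsum_le_tsum_norm hgnorm
  have hsplit : (∑ n ∈ Finset.range 16, ‖g n‖) + ∑' n : ℕ, ‖g (n + 16)‖ = ∑' n, ‖g n‖ :=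
    Summable.sum_add_tsum_nat_add 16 hgnorm
  have hl2l := Real.log_two_gt_d9
  have hsq : (0.48045:ℝ) ≤ Real.log 2 * Real.log 2 :=
    calc (0.48045:ℝ) ≤ 0.6931471803 * 0.6931471803 := by norm_num
      _ ≤ Real.log 2 * Real.log 2 := mul_le_mul hl2l.le hl2l.le (by norm_num) hl20
  have hge : 0.48045 * y ≤ ‖term (logMul ↗Λ) s 2‖ := by
    rw [hmain]
    exact mul_le_mul_of_nonneg_right hsq hy0.le
  linarith

end Auxiliary

section Main

open LSeries ArithmeticFunction
open scoped LSeries.notation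

private lemma nu_eq {s : ℂ} (hs : 1 < s.re) :
    nu s = riemannZeta s ^ 2 * LSeries (logMul ↗Λ) s := by
  have hne1 : s ≠ 1 := fun h => by simp [h] at hs
  have habs : abscissaOfAbsConv ↗Λ < s.re := by
    refine lt_of_le_of_lt (abscissaOfAbsConv_le_of_forall_lt_LSeriesSummable
      fun y hy => LSeriesSummable_vonMangoldt (by simpa using hy)) ?_
    exact_mod_cast hs
  have hζ : DifferentiableAt ℂ riemannZeta s := differentiableAt_riemannZeta hne1
  have hζ' : DifferentiableAt ℂ (deriv riemannZeta) s := by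
    have hdo : DifferentiableOn ℂ riemannZeta {(1:ℂ)}ᶜ :=
      fun z hz => (differentiableAt_riemannZeta hz).differentiableWithinAt
    exact (((hdo.analyticOnNhd isOpen_compl_singleton).deriv) s hne1).differentiableAt
  have hz : riemannZeta s ≠ 0 := riemannZeta_ne_zero_of_one_lt_re hs
  have hev : (LSeries ↗Λ) =ᶠ[nhds s] (fun z => -deriv riemannZeta z / riemannZeta z) := by
    filter_upwards [(isOpen_lt continuous_const continuous_re).mem_nhds hs] with z hz
    exact LSeries_vonMangoldt_eq_deriv_riemannZeta_div hz
  have h2 : deriv (fun z => -deriv riemannZeta z / riemannZeta z) s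
      = -(nu s) / riemannZeta s ^ 2 := by
    rw [deriv_fun_div (c := fun z => -deriv riemannZeta z) hζ'.neg hζ hz, deriv.fun_neg]
    have h3 : deriv (deriv riemannZeta) s = iteratedDeriv 2 riemannZeta s := by
      rw [iteratedDeriv_succ, iteratedDeriv_one]
    rw [h3, nu]
    ring
  have key := hev.deriv_eq
  rw [LSeries_deriv habs, h2] at key
  have hz2 : riemannZeta s ^ 2 ≠ 0 := pow_ne_zero 2 hz
  field_simp at key
  rw [← neg_inj.mp key]
  ring

end Main

/-- Zero-free region: `ν(s) ≠ 0` for `Re(s) ≥ 4.25`. -/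
theorem nu_ne_zero_of_re_ge (s : ℂ) (hs : (4.25 : ℝ) ≤ s.re) : nu s ≠ 0 := by
  have hs1 : 1 < s.re := by norm_num at hs ⊢; linarith
  rw [nu_eq hs1]
  exact mul_ne_zero (pow_ne_zero 2 (riemannZeta_ne_zero_of_one_lt_re hs1))
    (LSeries_logMul_vonMangoldt_ne_zero hs)
end

section
/- For every real t, |(ζ'/ζ)'(5 − it)| ≥ (log 2)²·2^{−5} − Σ_{n=3}^∞ Λ(n)·log(n)·n^{−5} ≥ 0.0075, where Λ is the von Mangoldt function; consequently |ζ(5−it)² / ν(5−it)| ≤ 1/0.0075 < 135. -/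
open Complex

set_option maxHeartbeats 1000000
open LSeries ArithmeticFunction LSeries.notation

lemma log3_lt : Real.log 3 < 1.09862 := by
  have h12 : (12:ℝ) * Real.log 3 = 19 * Real.log 2 + Real.log (531441/524288) := by
    rw [show (531441:ℝ)/524288 = 3^12 / 2^19 by norm_num,
        Real.log_div (by positivity) (by positivity), Real.log_pow, Real.log_pow]
    push_cast; ring
  have hb : Real.log (531441/524288) ≤ 531441/524288 - 1 :=
    Real.log_le_sub_one_of_pos (by norm_num)
  nlinarith [Real.log_two_lt_d9]

lemma log5_lt : Real.log 5 < 1.6095310 := by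
  have h : (3:ℝ) * Real.log 5 = 7 * Real.log 2 - Real.log (128/125) := by
    rw [show (128:ℝ)/125 = 2^7/5^3 by norm_num,
        Real.log_div (by positivity) (by positivity), Real.log_pow, Real.log_pow]
    push_cast; ring
  have hb : Real.log (125/128) ≤ 125/128 - 1 := Real.log_le_sub_one_of_pos (by norm_num)
  have h2 : Real.log (125/128) = -Real.log (128/125) := by
    rw [← Real.log_inv]; norm_num
  nlinarith [Real.log_two_lt_d9]

lemma log7_lt : Real.log 7 < 1.9460211 := by
  have h : (2:ℝ) * Real.log 7 = 4 * Real.log 2 + Real.log 3 + Real.log (49/48) := by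
    rw [show (49:ℝ)/48 = 7^2 / (2^4 * 3) by norm_num,
        Real.log_div (by positivity) (by positivity), Real.log_mul (by positivity) (by norm_num),
        Real.log_pow, Real.log_pow]
    push_cast; ring
  have hb : Real.log (49/48) ≤ 49/48 - 1 := Real.log_le_sub_one_of_pos (by norm_num)
  nlinarith [Real.log_two_lt_d9, log3_lt]

lemma log11_lt : Real.log 11 < 2.3979630 := by
  have h : (2:ℝ) * Real.log 11
      = 3 * Real.log 2 + Real.log 3 + Real.log 5 + Real.log (121/120) := by
    rw [show (121:ℝ)/120 = 11^2 / (2^3 * 3 * 5) by norm_num,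
        Real.log_div (by positivity) (by positivity), Real.log_mul (by positivity) (by norm_num),
        Real.log_mul (by positivity) (by norm_num), Real.log_pow, Real.log_pow]
    push_cast; ring
  have hb : Real.log (121/120) ≤ 121/120 - 1 := Real.log_le_sub_one_of_pos (by norm_num)
  nlinarith [Real.log_two_lt_d9, log3_lt, log5_lt]

lemma log13_lt : Real.log 13 < 2.5650176 := by
  have h : (2:ℝ) * Real.log 13
      = 3 * Real.log 2 + Real.log 3 + Real.log 7 + Real.log (169/168) := by
    rw [show (169:ℝ)/168 = 13^2 / (2^3 * 3 * 7) by norm_num,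
        Real.log_div (by positivity) (by positivity), Real.log_mul (by positivity) (by norm_num),
        Real.log_mul (by positivity) (by norm_num), Real.log_pow, Real.log_pow]
    push_cast; ring
  have hb : Real.log (169/168) ≤ 169/168 - 1 := Real.log_le_sub_one_of_pos (by norm_num)
  nlinarith [Real.log_two_lt_d9, log3_lt, log7_lt]

lemma log17_lt : Real.log 17 < 2.8332241 := by
  have h : (2:ℝ) * Real.log 17
      = 5 * Real.log 2 + 2 * Real.log 3 + Real.log (289/288) := by
    rw [show (289:ℝ)/288 = 17^2 / (2^5 * 3^2) by norm_num,
        Real.log_div (by positivity) (by positivity), Real.log_mul (by positivity) (by positivity),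
        Real.log_pow, Real.log_pow, Real.log_pow]
    push_cast; ring
  have hb : Real.log (289/288) ≤ 289/288 - 1 := Real.log_le_sub_one_of_pos (by norm_num)
  nlinarith [Real.log_two_lt_d9, log3_lt]

lemma log19_lt : Real.log 19 < 2.9444952 := by
  have h : (2:ℝ) * Real.log 19
      = 3 * Real.log 2 + 2 * Real.log 3 + Real.log 5 + Real.log (361/360) := by
    rw [show (361:ℝ)/360 = 19^2 / (2^3 * 3^2 * 5) by norm_num,
        Real.log_div (by positivity) (by positivity), Real.log_mul (by positivity) (by norm_num),
        Real.log_mul (by positivity) (by positivity), Real.log_pow, Real.log_pow, Real.log_pow]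
    push_cast; ring
  have hb : Real.log (361/360) ≤ 361/360 - 1 := Real.log_le_sub_one_of_pos (by norm_num)
  nlinarith [Real.log_two_lt_d9, log3_lt, log5_lt]

lemma term_norm (s : ℂ) (hs : s.re = 5) (n : ℕ) :
    ‖term (logMul ↗Λ) s n‖ = Λ n * Real.log n * ((n : ℕ) : ℝ) ^ (-5 : ℤ) := by
  rw [norm_term_eq, hs]
  rcases eq_or_ne n 0 with rfl | hn
  · simp
  · rw [if_neg hn]
    have hn1 : 1 ≤ (n:ℝ) := by exact_mod_cast Nat.one_le_iff_ne_zero.mpr hn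
    have h1 : ‖logMul ↗Λ n‖ = Real.log n * Λ n := by
      simp only [logMul, norm_mul, ← Complex.natCast_log, Complex.norm_real]
      rw [Real.norm_eq_abs, Real.norm_eq_abs, _root_.abs_of_nonneg (Real.log_natCast_nonneg n),
        _root_.abs_of_nonneg vonMangoldt_nonneg]
    rw [h1, show ((5:ℝ)) = ((5:ℕ):ℝ) by norm_num, Real.rpow_natCast,
      show (-5:ℤ) = -((5:ℕ):ℤ) by norm_num, zpow_neg, zpow_natCast]
    rw [div_eq_mul_inv]; ring

lemma abscissa_lt (s : ℂ) (hs : s.re = 5) : abscissaOfAbsConv ↗Λ < s.re := by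
  have h1 : abscissaOfAbsConv ↗Λ ≤ 1 :=
    abscissaOfAbsConv_le_of_forall_lt_LSeriesSummable fun y hy =>
      LSeriesSummable_vonMangoldt (by simpa using hy)
  refine h1.trans_lt ?_
  rw [hs]
  exact_mod_cast (by norm_num : (1:ℝ) < 5)

lemma summable_g : Summable (fun n : ℕ => Λ n * Real.log n * ((n : ℕ) : ℝ) ^ (-5 : ℤ)) := by
  have habs : abscissaOfAbsConv ↗Λ < (5:ℂ).re := abscissa_lt 5 (by simp)
  have h := summable_norm_iff.mpr (LSeriesSummable_logMul_of_lt_re habs)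
  exact h.congr fun n => term_norm 5 (by simp) n

lemma sq_log_le {x : ℝ} (hx : 16 ≤ x) : Real.log x ^ 2 ≤ 4 * x := by
  have h0 : (0:ℝ) < x := by linarith
  have h1 : Real.log x ≤ x ^ ((1:ℝ)/4) / (1/4) := Real.log_le_rpow_div h0.le (by norm_num)
  have h2 : (x ^ ((1:ℝ)/4))^2 = x ^ ((1:ℝ)/2) := by
    rw [← Real.rpow_natCast (x ^ ((1:ℝ)/4)) 2, ← Real.rpow_mul h0.le]; norm_num
  have h3 : (x ^ ((1:ℝ)/2))^2 = x := by
    rw [← Real.rpow_natCast (x ^ ((1:ℝ)/2)) 2, ← Real.rpow_mul h0.le]; norm_num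
  have h4 : (4:ℝ) ≤ x ^ ((1:ℝ)/2) := by
    nlinarith [Real.rpow_nonneg h0.le ((1:ℝ)/2)]
  have hlog0 : 0 ≤ Real.log x := Real.log_nonneg (by linarith)
  nlinarith [Real.rpow_nonneg h0.le ((1:ℝ)/4)]

lemma g_le {m : ℕ} (hm : 16 ≤ m) :
    Λ m * Real.log m * ((m : ℕ) : ℝ) ^ (-5 : ℤ) ≤ 4 / ((m:ℝ))^4 := by
  have hm' : (16:ℝ) ≤ (m:ℝ) := by exact_mod_cast hm
  have h0 : (0:ℝ) < (m:ℝ) := by linarith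
  have h1 : Λ m ≤ Real.log m := vonMangoldt_le_log
  have h2 : Real.log (m:ℝ) ^ 2 ≤ 4 * m := sq_log_le hm'
  have h3 : ((m:ℕ):ℝ) ^ (-5 : ℤ) = 1 / (m:ℝ)^5 := by
    rw [show (-5:ℤ) = -((5:ℕ):ℤ) by norm_num, zpow_neg, zpow_natCast]; rw [one_div]
  rw [h3]
  have hlog0 : 0 ≤ Real.log (m:ℝ) := Real.log_nonneg (by linarith)
  have hL0 : 0 ≤ Λ m := vonMangoldt_nonneg
  have key : Λ m * Real.log (m:ℝ) ≤ 4 * (m:ℝ) := by nlinarith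
  calc Λ m * Real.log (m:ℝ) * (1/(m:ℝ)^5)
      ≤ (4*(m:ℝ)) * (1/(m:ℝ)^5) := by
        apply mul_le_mul_of_nonneg_right key (by positivity)
    _ = 4 / (m:ℝ)^4 := by field_simp

lemma telescope_le {x : ℝ} (hx : 20 ≤ x) :
    4 / x^4 ≤ (4/3) * (1/(x-1)^3 - 1/x^3) := by
  have h1 : (0:ℝ) < x - 1 := by linarith
  have h0 : (0:ℝ) < x := by linarith
  have key : (4/3)*(1/(x-1)^3 - 1/x^3) - 4/x^4
      = (24*x^2 - 32*x + 12)/(3*(x-1)^3*x^4) := by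
    field_simp
    ring
  have hnum : (0:ℝ) < 24*x^2 - 32*x + 12 := by nlinarith
  have hden : (0:ℝ) < 3*(x-1)^3*x^4 := by positivity
  have := div_pos hnum hden
  linarith

lemma tail_le :
    ∑' n : ℕ, Λ ((n + 17) + 3) * Real.log (((n + 17 : ℕ) : ℝ) + 3)
        * (((n + 17) + 3 : ℕ) : ℝ) ^ (-5 : ℤ) ≤ 4 / 20577 := by
  have hterm : ∀ i : ℕ, Λ ((i + 17) + 3) * Real.log (((i + 17 : ℕ) : ℝ) + 3)
      * (((i + 17) + 3 : ℕ) : ℝ) ^ (-5 : ℤ)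
      ≤ (fun j : ℕ => (4/3) * (1/(((j:ℝ)+19))^3)) i
        - (fun j : ℕ => (4/3) * (1/(((j:ℝ)+19))^3)) (i+1) := by
    intro i
    have e : i + 17 + 3 = i + 20 := by omega
    rw [e]
    have hci : (0:ℝ) ≤ (i:ℝ) := Nat.cast_nonneg i
    have h := g_le (m := i + 20) (by omega)
    have h2 := telescope_le (x := (i:ℝ)+20) (by linarith)
    have e2 : ((i + 20 : ℕ) : ℝ) = (i:ℝ) + 20 := by push_cast; ring
    have e3 : Real.log (((i + 17 : ℕ) : ℝ) + 3) = Real.log (((i+20 : ℕ)):ℝ) := by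
      rw [e2]; push_cast; ring_nf
    rw [e3]
    refine h.trans (le_trans (le_of_eq (by rw [e2])) (h2.trans (le_of_eq ?_)))
    simp only
    push_cast
    ring
  have hnonneg : ∀ n : ℕ, (0:ℝ) ≤ Λ ((n + 17) + 3) * Real.log (((n + 17 : ℕ) : ℝ) + 3)
      * (((n + 17) + 3 : ℕ) : ℝ) ^ (-5 : ℤ) := by
    intro n
    have hc : (0:ℝ) ≤ (n:ℝ) := Nat.cast_nonneg n
    have hl : (0:ℝ) ≤ Real.log (((n + 17 : ℕ) : ℝ) + 3) := Real.log_nonneg (by push_cast; linarith)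
    have h2 : (0:ℝ) ≤ (((n + 17) + 3 : ℕ) : ℝ) ^ (-5 : ℤ) := by positivity
    exact mul_nonneg (mul_nonneg vonMangoldt_nonneg hl) h2
  apply Real.tsum_le_of_sum_range_le hnonneg
  intro N
  calc ∑ i ∈ Finset.range N, Λ ((i + 17) + 3) * Real.log (((i + 17 : ℕ) : ℝ) + 3)
        * (((i + 17) + 3 : ℕ) : ℝ) ^ (-5 : ℤ)
      ≤ ∑ i ∈ Finset.range N, ((fun j : ℕ => (4/3) * (1/(((j:ℝ)+19))^3)) i
          - (fun j : ℕ => (4/3) * (1/(((j:ℝ)+19))^3)) (i+1)) :=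
        Finset.sum_le_sum fun i _ => hterm i
    _ = (fun j : ℕ => (4/3) * (1/(((j:ℝ)+19))^3)) 0
        - (fun j : ℕ => (4/3) * (1/(((j:ℝ)+19))^3)) N :=
        Finset.sum_range_sub' (fun j : ℕ => (4/3) * (1/(((j:ℝ)+19))^3)) N
    _ ≤ 4/20577 := by
        simp only
        have hc : (0:ℝ) ≤ (N:ℝ) := Nat.cast_nonneg N
        have h1 : (0:ℝ) ≤ (4/3) * (1/(((N:ℝ)+19))^3) := by positivity
        have h2 : (4:ℝ)/3 * (1/(((0:ℕ):ℝ)+19)^3) = 4/20577 := by norm_num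
        linarith

-- von Mangoldt values
lemma L3 : Λ 3 = Real.log 3 := vonMangoldt_apply_prime (by norm_num)
lemma L4 : Λ 4 = Real.log 2 := by
  rw [show (4:ℕ) = 2^2 by norm_num, vonMangoldt_apply_pow (by norm_num),
    vonMangoldt_apply_prime Nat.prime_two]; norm_num
lemma L5 : Λ 5 = Real.log 5 := vonMangoldt_apply_prime (by norm_num)
lemma L6 : Λ 6 = 0 := vonMangoldt_eq_zero_iff.mpr (by decide)
lemma L7 : Λ 7 = Real.log 7 := vonMangoldt_apply_prime (by norm_num)
lemma L8 : Λ 8 = Real.log 2 := by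
  rw [show (8:ℕ) = 2^3 by norm_num, vonMangoldt_apply_pow (by norm_num),
    vonMangoldt_apply_prime Nat.prime_two]; norm_num
lemma L9 : Λ 9 = Real.log 3 := by
  rw [show (9:ℕ) = 3^2 by norm_num, vonMangoldt_apply_pow (by norm_num),
    vonMangoldt_apply_prime (by norm_num)]; norm_num
lemma L10 : Λ 10 = 0 := vonMangoldt_eq_zero_iff.mpr (by decide)
lemma L11 : Λ 11 = Real.log 11 := vonMangoldt_apply_prime (by norm_num)
lemma L12 : Λ 12 = 0 := vonMangoldt_eq_zero_iff.mpr (by decide)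
lemma L13 : Λ 13 = Real.log 13 := vonMangoldt_apply_prime (by norm_num)
lemma L14 : Λ 14 = 0 := vonMangoldt_eq_zero_iff.mpr (by decide)
lemma L15 : Λ 15 = 0 := vonMangoldt_eq_zero_iff.mpr (by decide +kernel)
lemma L16 : Λ 16 = Real.log 2 := by
  rw [show (16:ℕ) = 2^4 by norm_num, vonMangoldt_apply_pow (by norm_num),
    vonMangoldt_apply_prime Nat.prime_two]; norm_num
lemma L17 : Λ 17 = Real.log 17 := vonMangoldt_apply_prime (by norm_num)
lemma L18 : Λ 18 = 0 := vonMangoldt_eq_zero_iff.mpr (by decide)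
lemma L19 : Λ 19 = Real.log 19 := vonMangoldt_apply_prime (by norm_num)

lemma lg4 : Real.log 4 = 2 * Real.log 2 := by
  rw [show (4:ℝ) = 2^2 by norm_num, Real.log_pow]; push_cast; ring
lemma lg8 : Real.log 8 = 3 * Real.log 2 := by
  rw [show (8:ℝ) = 2^3 by norm_num, Real.log_pow]; push_cast; ring
lemma lg9 : Real.log 9 = 2 * Real.log 3 := by
  rw [show (9:ℝ) = 3^2 by norm_num, Real.log_pow]; push_cast; ring
lemma lg16 : Real.log 16 = 4 * Real.log 2 := by
  rw [show (16:ℝ) = 2^4 by norm_num, Real.log_pow]; push_cast; ring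

lemma partA (t : ℝ) :
    ‖deriv (fun z => deriv riemannZeta z / riemannZeta z) (5 - Complex.I * t)‖
      ≥ (Real.log 2) ^ 2 * (2 : ℝ) ^ (-5 : ℤ)
        - ∑' n : ℕ, Λ (n + 3) * Real.log (n + 3) * ((n + 3 : ℕ) : ℝ) ^ (-5 : ℤ) := by
  set s : ℂ := 5 - Complex.I * t with hs_def
  have hre : s.re = 5 := by simp [hs_def]
  have hs1 : 1 < s.re := by rw [hre]; norm_num
  have habs : abscissaOfAbsConv ↗Λ < s.re := by
    have h1 : abscissaOfAbsConv ↗Λ ≤ 1 :=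
      abscissaOfAbsConv_le_of_forall_lt_LSeriesSummable fun y hy =>
        LSeriesSummable_vonMangoldt (by simpa using hy)
    refine h1.trans_lt ?_
    rw [hre]
    exact_mod_cast (by norm_num : (1:ℝ) < 5)
  have hsum' : Summable (term (logMul ↗Λ) s) := LSeriesSummable_logMul_of_lt_re habs
  have hsum : Summable (fun n => ‖term (logMul ↗Λ) s n‖) := summable_norm_iff.mpr hsum'
  have hD : deriv (fun z => deriv riemannZeta z / riemannZeta z) s = LSeries (logMul ↗Λ) s := by
    have hev : (fun z => deriv riemannZeta z / riemannZeta z)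
        =ᶠ[nhds s] (fun z => -LSeries ↗Λ z) := by
      filter_upwards [(isOpen_lt continuous_const Complex.continuous_re).mem_nhds hs1] with z hz
      rw [LSeries_vonMangoldt_eq_deriv_riemannZeta_div hz]; ring
    rw [hev.deriv_eq, deriv.fun_neg, LSeries_deriv habs, neg_neg]
  have hL : LSeries (logMul ↗Λ) s
      = term (logMul ↗Λ) s 2 + ∑' n, term (logMul ↗Λ) s (n + 3) := by
    rw [LSeries, ← Summable.sum_add_tsum_nat_add 3 hsum']
    congr 1
    rw [Finset.sum_range_succ, Finset.sum_range_succ, Finset.sum_range_one, term_zero]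
    rw [term_of_ne_zero one_ne_zero]
    simp [logMul]
  have hterm2 : ‖term (logMul ↗Λ) s 2‖ = (Real.log 2) ^ 2 * (2:ℝ) ^ (-5:ℤ) := by
    rw [term_norm s hre 2, vonMangoldt_apply_prime Nat.prime_two]
    push_cast; ring
  have htail : ‖∑' n, term (logMul ↗Λ) s (n + 3)‖
      ≤ ∑' n : ℕ, Λ (n + 3) * Real.log (n + 3) * ((n + 3 : ℕ) : ℝ) ^ (-5 : ℤ) := by
    have hs3 : Summable (fun n => ‖term (logMul ↗Λ) s (n + 3)‖) :=
      (summable_nat_add_iff (f := fun n => ‖term (logMul ↗Λ) s n‖) 3).mpr hsum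
    refine (norm_tsum_le_tsum_norm hs3).trans_eq (tsum_congr fun n => ?_)
    rw [term_norm s hre (n + 3)]
    push_cast; ring
  rw [show ‖deriv (fun z => deriv riemannZeta z / riemannZeta z) s‖
      = ‖deriv (fun z => deriv riemannZeta z / riemannZeta z) s‖ from rfl, hD, hL]
  have h2 : ‖term (logMul ↗Λ) s 2‖
      ≤ ‖term (logMul ↗Λ) s 2 + ∑' n, term (logMul ↗Λ) s (n + 3)‖
        + ‖∑' n, term (logMul ↗Λ) s (n + 3)‖ := by
    calc ‖term (logMul ↗Λ) s 2‖
        = ‖(term (logMul ↗Λ) s 2 + ∑' n, term (logMul ↗Λ) s (n + 3))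
            + -(∑' n, term (logMul ↗Λ) s (n + 3))‖ := by rw [add_neg_cancel_right]
      _ ≤ _ := (norm_add_le _ _).trans_eq (by rw [norm_neg])
  linarith

lemma partB :
    (Real.log 2) ^ 2 * (2 : ℝ) ^ (-5 : ℤ)
      - ∑' n : ℕ, Λ (n + 3) * Real.log (n + 3) * ((n + 3 : ℕ) : ℝ) ^ (-5 : ℤ) ≥ 0.0075 := by
  have hsum3 : Summable (fun n : ℕ => Λ (n + 3) * Real.log ((n:ℝ) + 3)
      * ((n + 3 : ℕ) : ℝ) ^ (-5 : ℤ)) := by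
    have h := (summable_nat_add_iff
      (f := fun n : ℕ => Λ n * Real.log n * ((n : ℕ) : ℝ) ^ (-5 : ℤ)) 3).mpr summable_g
    exact h.congr fun n => by push_cast; ring
  have hsplit := Summable.sum_add_tsum_nat_add (f := fun n : ℕ => Λ (n + 3) * Real.log ((n:ℝ) + 3)
      * ((n + 3 : ℕ) : ℝ) ^ (-5 : ℤ)) 17 hsum3
  have hfin : ∑ i ∈ Finset.range 17, Λ (i + 3) * Real.log ((i:ℝ) + 3)
      * ((i + 3 : ℕ) : ℝ) ^ (-5 : ℤ) ≤ 0.0071090 := by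
    simp only [Finset.sum_range_succ, Finset.sum_range_zero]
    norm_num [L3, L4, L5, L6, L7, L8, L9, L10, L11, L12, L13, L14, L15, L16, L17, L18, L19,
      lg4, lg8, lg9, lg16]
    have h2l := Real.log_two_gt_d9
    have h2u := Real.log_two_lt_d9
    have h3 := log3_lt
    have h5 := log5_lt
    have h7 := log7_lt
    have h11 := log11_lt
    have h13 := log13_lt
    have h17 := log17_lt
    have h19 := log19_lt
    have n2 : (0:ℝ) ≤ Real.log 2 := Real.log_nonneg (by norm_num)
    have n3 : (0:ℝ) ≤ Real.log 3 := Real.log_nonneg (by norm_num)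
    have n5 : (0:ℝ) ≤ Real.log 5 := Real.log_nonneg (by norm_num)
    have n7 : (0:ℝ) ≤ Real.log 7 := Real.log_nonneg (by norm_num)
    have n11 : (0:ℝ) ≤ Real.log 11 := Real.log_nonneg (by norm_num)
    have n13 : (0:ℝ) ≤ Real.log 13 := Real.log_nonneg (by norm_num)
    have n17 : (0:ℝ) ≤ Real.log 17 := Real.log_nonneg (by norm_num)
    have n19 : (0:ℝ) ≤ Real.log 19 := Real.log_nonneg (by norm_num)
    nlinarith [mul_le_mul h2u.le h2u.le n2 (by norm_num : (0:ℝ) ≤ 0.6931471808),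
      mul_le_mul h3.le h3.le n3 (by norm_num : (0:ℝ) ≤ 1.09862),
      mul_le_mul h5.le h5.le n5 (by norm_num : (0:ℝ) ≤ 1.6095310),
      mul_le_mul h7.le h7.le n7 (by norm_num : (0:ℝ) ≤ 1.9460211),
      mul_le_mul h11.le h11.le n11 (by norm_num : (0:ℝ) ≤ 2.3979630),
      mul_le_mul h13.le h13.le n13 (by norm_num : (0:ℝ) ≤ 2.5650176),
      mul_le_mul h17.le h17.le n17 (by norm_num : (0:ℝ) ≤ 2.8332241),
      mul_le_mul h19.le h19.le n19 (by norm_num : (0:ℝ) ≤ 2.9444952)]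
  have hS : ∑' n : ℕ, Λ (n + 3) * Real.log ((n:ℝ) + 3) * ((n + 3 : ℕ) : ℝ) ^ (-5 : ℤ)
      ≤ 0.0073034 := by
    rw [← hsplit]
    have := tail_le
    have hfin' := hfin
    push_cast at this hfin' ⊢
    linarith
  have h2l := Real.log_two_gt_d9
  have n2 : (0:ℝ) ≤ Real.log 2 := Real.log_nonneg (by norm_num)
  have hsq : (Real.log 2) ^ 2 ≥ 0.6931471803 ^ 2 := by nlinarith
  have h32 : ((2:ℝ)) ^ (-5 : ℤ) = 1 / 32 := by norm_num
  rw [h32]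
  nlinarith [hS]

lemma partC (t : ℝ)
    (hA : 0.0075 ≤ ‖deriv (fun z => deriv riemannZeta z / riemannZeta z)
      (5 - Complex.I * t)‖) :
    ‖riemannZeta (5 - Complex.I * t) ^ 2 / nu (5 - Complex.I * t)‖ ≤ 1 / 0.0075 := by
  set s : ℂ := 5 - Complex.I * t with hs_def
  have hre : s.re = 5 := by simp [hs_def]
  have hs1ne : s ≠ 1 := by
    intro h
    rw [h] at hre
    simp at hre
  have hzne : riemannZeta s ≠ 0 := riemannZeta_ne_zero_of_one_lt_re (by rw [hre]; norm_num)
  have hd1 : DifferentiableAt ℂ riemannZeta s := differentiableAt_riemannZeta hs1ne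
  have hd2 : DifferentiableAt ℂ (deriv riemannZeta) s := by
    have hopen : IsOpen {z : ℂ | z ≠ 1} := isOpen_compl_singleton
    have hdiff : DifferentiableOn ℂ riemannZeta {z : ℂ | z ≠ 1} := fun z hz =>
      (differentiableAt_riemannZeta hz).differentiableWithinAt
    have han := (hdiff.analyticOnNhd hopen).deriv
    exact (han s hs1ne).differentiableAt
  have hderiv : deriv (fun z => deriv riemannZeta z / riemannZeta z) s
      = nu s / (riemannZeta s) ^ 2 := by
    rw [deriv_fun_div hd2 hd1 hzne]
    have h2 : iteratedDeriv 2 riemannZeta = deriv (deriv riemannZeta) := by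
      rw [iteratedDeriv_succ, iteratedDeriv_one]
    rw [nu, h2]
    ring
  rw [hderiv] at hA
  have hnu : nu s ≠ 0 := by
    intro h
    rw [h] at hA
    simp at hA
    norm_num at hA
  have heq : riemannZeta s ^ 2 / nu s = (nu s / riemannZeta s ^ 2)⁻¹ := (inv_div _ _).symm
  rw [heq, norm_inv]
  rw [show (1:ℝ) / 0.0075 = (0.0075 : ℝ)⁻¹ by norm_num]
  exact inv_anti₀ (by norm_num) hA

/-- For every real `t`:
`|(ζ'/ζ)'(5 − it)| ≥ (log 2)²·2^{−5} − Σ_{n=3}^∞ Λ(n)·log(n)·n^{−5} ≥ 0.0075`, and consequently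
`|ζ(5−it)²/ν(5−it)| ≤ 1/0.0075 < 135`. -/
theorem logDeriv_zeta_deriv_lower_bound (t : ℝ) :
    ‖deriv (fun z => deriv riemannZeta z / riemannZeta z) (5 - Complex.I * t)‖
        ≥ (Real.log 2) ^ 2 * (2 : ℝ) ^ (-5 : ℤ)
          - ∑' n : ℕ, ArithmeticFunction.vonMangoldt (n + 3) * Real.log (n + 3)
              * ((n + 3 : ℕ) : ℝ) ^ (-5 : ℤ) ∧
      (Real.log 2) ^ 2 * (2 : ℝ) ^ (-5 : ℤ)
          - ∑' n : ℕ, ArithmeticFunction.vonMangoldt (n + 3) * Real.log (n + 3)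
              * ((n + 3 : ℕ) : ℝ) ^ (-5 : ℤ) ≥ 0.0075 ∧
      ‖riemannZeta (5 - Complex.I * t) ^ 2 / nu (5 - Complex.I * t)‖
        ≤ 1 / 0.0075 ∧
      (1 / 0.0075 : ℝ) < 135 := by
  have hA := partA t
  have hB := partB
  exact ⟨hA, hB, partC t (le_trans hB hA), by norm_num⟩
end
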